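/- Let m ∉ {0, 1, −1, −2} and ρ ∉ {1/4, 1/6}, λ ∈ ℝ, let I ⊆ ℝ be a nonempty open connected interval, and let a, b : I → ℝ be real analytic functions with a(s) ≠ b(s) and Q(a(s),b(s)) ≠ 0 for all s ∈ I, whose derivatives satisfy a' = A₀(a,b) and b' = B₀(a,b), and such that X(s) := X₀(a(s),b(s)) satisfies X' = −2bX on I. Then at least one of the following holds identically on I: (1) b ≡ 0; (2) 3(4ρ−1)ab − λ ≡ 0; (3) λ(m−1)(3ρ−1) + ab(m−1)(4ρ−1) + a²(9ρ−2)(4ρ−1+m(2ρ−1)) ≡ 0. -/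

import Mathlib

noncomputable section

/-- Q(a,b) := b(m−1)(4ρ−1) + a(4ρ−1+m(2ρ−1)) -/
def Q (m ρ a b : ℝ) : ℝ := b * (m - 1) * (4 * ρ - 1) + a * (4 * ρ - 1 + m * (2 * ρ - 1))

/-- X₀(a,b) := (b−a)·(b²(m−1)(1−4ρ) − λ(m+1) + 2ab(4ρ−1+m(5ρ−1)))/Q(a,b) -/
def X0 (m ρ lam a b : ℝ) : ℝ :=
  (b - a) * (b ^ 2 * (m - 1) * (1 - 4 * ρ) - lam * (m + 1)
      + 2 * a * b * (4 * ρ - 1 + m * (5 * ρ - 1))) / Q m ρ a b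

/-- A₀(a,b) := (bλ(m−1) + a²b(1−2(m+2)ρ) + a³(1−4ρ+m(1−2ρ)) + a(λ − 2b²(m−1)(4ρ−1)))/Q(a,b) -/
def A0 (m ρ lam a b : ℝ) : ℝ :=
  (b * lam * (m - 1) + a ^ 2 * b * (1 - 2 * (m + 2) * ρ)
      + a ^ 3 * (1 - 4 * ρ + m * (1 - 2 * ρ))
      + a * (lam - 2 * b ^ 2 * (m - 1) * (4 * ρ - 1))) / Q m ρ a b

/-- B₀(a,b) := b·(λm − b²(m−1)(4ρ−1) − a²(1+m−4ρ−2mρ) − ab(8ρ−2+m(10ρ−3)))/Q(a,b) -/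
def B0 (m ρ lam a b : ℝ) : ℝ :=
  b * (lam * m - b ^ 2 * (m - 1) * (4 * ρ - 1) - a ^ 2 * (1 + m - 4 * ρ - 2 * m * ρ)
      - a * b * (8 * ρ - 2 + m * (10 * ρ - 3))) / Q m ρ a b

open Filter Set Topology in
lemma analytic_mul_eq_zero {f g : ℝ → ℝ} {I : Set ℝ} (hne : I.Nonempty) (hI : IsOpen I)
    (hconn : IsPreconnected I) (hf : AnalyticOnNhd ℝ f I) (hg : AnalyticOnNhd ℝ g I)
    (h : ∀ s ∈ I, f s * g s = 0) : (∀ s ∈ I, f s = 0) ∨ (∀ s ∈ I, g s = 0) := by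
  rcases hf.eqOn_zero_or_eventually_ne_zero_of_preconnected hconn with h1 | h1
  · exact Or.inl fun s hs => h1 hs
  rcases hg.eqOn_zero_or_eventually_ne_zero_of_preconnected hconn with h2 | h2
  · exact Or.inr fun s hs => h2 hs
  exfalso
  obtain ⟨s₀, hs₀⟩ := hne
  have hmem : {x | f x ≠ 0} ∩ {x | g x ≠ 0} ∈ Filter.codiscreteWithin I := inter_mem h1 h2
  rw [mem_codiscreteWithin] at hmem
  have hdisj := hmem s₀ hs₀
  rw [Filter.disjoint_principal_right] at hdisj
  have hInhds : I ∈ 𝓝[≠] s₀ := nhdsWithin_le_nhds (hI.mem_nhds hs₀)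
  have hmem2 : (I ∩ (I \ ({x | f x ≠ 0} ∩ {x | g x ≠ 0}))ᶜ) ∈ 𝓝[≠] s₀ :=
    inter_mem hInhds hdisj
  obtain ⟨x, hxI, hxc⟩ := Filter.nonempty_of_mem hmem2
  have hxS : x ∈ {x | f x ≠ 0} ∩ {x | g x ≠ 0} := by
    by_contra hxS
    exact hxc ⟨hxI, hxS⟩
  exact mul_ne_zero hxS.1 hxS.2 (h x hxI)

set_option maxRecDepth 8000
set_option maxHeartbeats 1000000

/-- Let m ∉ {0, 1, −1, −2} and ρ ∉ {1/4, 1/6}, λ ∈ ℝ, let I ⊆ ℝ be a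
nonempty open connected interval, and let a, b : I → ℝ be real analytic functions
with a(s) ≠ b(s) and Q(a(s),b(s)) ≠ 0 for all s ∈ I, whose derivatives satisfy
a' = A₀(a,b) and b' = B₀(a,b), and such that X(s) := X₀(a(s),b(s)) satisfies
X' = −2bX on I.  Then at least one of the following holds identically on I:
(1) b ≡ 0; (2) 3(4ρ−1)ab − λ ≡ 0;
(3) λ(m−1)(3ρ−1) + ab(m−1)(4ρ−1) + a²(9ρ−2)(4ρ−1+m(2ρ−1)) ≡ 0. -/

theorem stmt_6 (m ρ lam : ℝ)
    (hm0 : m ≠ 0) (hm1 : m ≠ 1) (hm1' : m ≠ -1) (hm2 : m ≠ -2)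
    (hρ4 : ρ ≠ 1 / 4) (hρ6 : ρ ≠ 1 / 6)
    (I : Set ℝ) (hne : I.Nonempty) (hI : IsOpen I) (hIc : I.OrdConnected)
    (a b : ℝ → ℝ)
    (hana : AnalyticOnNhd ℝ a I) (hbna : AnalyticOnNhd ℝ b I)
    (habne : ∀ s ∈ I, a s ≠ b s)
    (hQ : ∀ s ∈ I, Q m ρ (a s) (b s) ≠ 0)
    (hda : ∀ s ∈ I, HasDerivAt a (A0 m ρ lam (a s) (b s)) s)
    (hdb : ∀ s ∈ I, HasDerivAt b (B0 m ρ lam (a s) (b s)) s)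
    (hX : ∀ s ∈ I, HasDerivAt (fun t => X0 m ρ lam (a t) (b t))
        (-2 * b s * X0 m ρ lam (a s) (b s)) s) :
    (∀ s ∈ I, b s = 0) ∨
    (∀ s ∈ I, 3 * (4 * ρ - 1) * a s * b s - lam = 0) ∨
    (∀ s ∈ I, lam * (m - 1) * (3 * ρ - 1) + a s * b s * (m - 1) * (4 * ρ - 1)
        + (a s) ^ 2 * (9 * ρ - 2) * (4 * ρ - 1 + m * (2 * ρ - 1)) = 0) := by
  have hconn : IsPreconnected I := hIc.isPreconnected
  -- pointwise algebraic identity obtained from the ODE system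
  have key : ∀ s ∈ I,
      b s * ((3 * (4 * ρ - 1) * a s * b s - lam) *
        (lam * (m - 1) * (3 * ρ - 1) + a s * b s * (m - 1) * (4 * ρ - 1)
          + (a s) ^ 2 * (9 * ρ - 2) * (4 * ρ - 1 + m * (2 * ρ - 1)))) = 0 := by
    intro s hs
    have ha := hda s hs
    have hb := hdb s hs
    have hq : Q m ρ (a s) (b s) ≠ 0 := hQ s hs
    have hq2 : b s * (m - 1) * (4 * ρ - 1) + a s * (4 * ρ - 1 + m * (2 * ρ - 1)) ≠ 0 := by
      simpa [Q] using hq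
    have hden : HasDerivAt
        (fun t => b t * (m - 1) * (4 * ρ - 1) + a t * (4 * ρ - 1 + m * (2 * ρ - 1)))
        ((B0 m ρ lam (a s) (b s)) * (m - 1) * (4 * ρ - 1)
          + (A0 m ρ lam (a s) (b s)) * (4 * ρ - 1 + m * (2 * ρ - 1))) s :=
      ((hb.mul_const (m - 1)).mul_const (4 * ρ - 1)).add
        (ha.mul_const (4 * ρ - 1 + m * (2 * ρ - 1)))
    have hnum := (hb.sub ha).mul
      (((((hb.pow 2).mul_const (m - 1)).mul_const (1 - 4 * ρ)).sub_const (lam * (m + 1))).add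
        (((ha.const_mul 2).mul hb).mul_const (4 * ρ - 1 + m * (5 * ρ - 1))))
    have hquot := hnum.div hden (by simpa [Q] using hq)
    have huniq := (hX s hs).unique (by simpa [X0, Q] using hquot.congr_of_eventuallyEq (f₁ := fun t => X0 m ρ lam (a t) (b t)) (Filter.Eventually.of_forall fun t => by simp [X0, Q]))
    have hab : b s - a s ≠ 0 := sub_ne_zero.mpr (Ne.symm (habne s hs))
    have hm1'' : m + 1 ≠ 0 := fun h => hm1' (by linarith)
    have key0 : (-2) * m * (m + 1) * (b s - a s) *
        (b s * ((3 * (4 * ρ - 1) * a s * b s - lam) *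
          (lam * (m - 1) * (3 * ρ - 1) + a s * b s * (m - 1) * (4 * ρ - 1)
            + (a s) ^ 2 * (9 * ρ - 2) * (4 * ρ - 1 + m * (2 * ρ - 1))))) = 0 := by
      have key0' : (-2) * m * (m + 1) * (b s - a s) *
          (b s * ((3 * (4 * ρ - 1) * a s * b s - lam) *
            (lam * (m - 1) * (3 * ρ - 1) + a s * b s * (m - 1) * (4 * ρ - 1)
              + (a s) ^ 2 * (9 * ρ - 2) * (4 * ρ - 1 + m * (2 * ρ - 1)))))
          * (b s * (m - 1) * (4 * ρ - 1) + a s * (4 * ρ - 1 + m * (2 * ρ - 1))) = 0 := by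
        simp only [X0, A0, B0, Q] at huniq
        field_simp at huniq
        linear_combination (-(b s * (m - 1) * (4 * ρ - 1) + a s * (4 * ρ - 1 + m * (2 * ρ - 1)))) * huniq
      exact (mul_eq_zero.mp key0').resolve_right hq2
    have hc : (-2) * m * (m + 1) * (b s - a s) ≠ 0 :=
      mul_ne_zero (mul_ne_zero (mul_ne_zero (by norm_num) hm0) hm1'') hab
    exact (mul_eq_zero.mp key0).resolve_left hc
  -- analytic factors
  have hF2 : AnalyticOnNhd ℝ (fun s => 3 * (4 * ρ - 1) * a s * b s - lam) I :=
    (((analyticOnNhd_const.mul hana).mul hbna).sub analyticOnNhd_const)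
  have hF3 : AnalyticOnNhd ℝ (fun s => lam * (m - 1) * (3 * ρ - 1)
      + a s * b s * (m - 1) * (4 * ρ - 1)
      + (a s) ^ 2 * (9 * ρ - 2) * (4 * ρ - 1 + m * (2 * ρ - 1))) I :=
    (analyticOnNhd_const.add (((hana.mul hbna).mul analyticOnNhd_const).mul
      analyticOnNhd_const)).add
      ((((hana.pow 2).mul analyticOnNhd_const).mul analyticOnNhd_const))
  rcases analytic_mul_eq_zero hne hI hconn hbna (hF2.mul hF3) key with h | h
  · exact Or.inl h
  rcases analytic_mul_eq_zero hne hI hconn hF2 hF3 h with h' | h'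
  · exact Or.inr (Or.inl h')
  · exact Or.inr (Or.inr h')
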